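/- For every natural number t ≥ 2 and every integer j, (1/π²) ∫₀^{2π}∫₀^{2π} ( cos(tω) − cos((t−2)ω) ) · sin(jφ) · sin φ / (1 − 2 cos ω · cos φ + cos²φ) dω dφ = (1/π) ∫₀^{2π} (cos φ)^{t−2} · ( cos((j+1)φ) − cos((j−1)φ) ) dφ. -/

import Mathlib

set_option maxHeartbeats 1000000

open Real intervalIntegral MeasureTheory

lemma Dpos {a : ℝ} (ha : |a| < 1) (ω : ℝ) :
    0 < 1 - 2 * Real.cos ω * a + a ^ 2 := by
  have h1 : Real.sin ω ^ 2 + Real.cos ω ^ 2 = 1 := Real.sin_sq_add_cos_sq ω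
  have h2 : 0 < (1 - |a|) ^ 2 := by nlinarith [abs_nonneg a]
  have h3 : Real.cos ω * a ≤ |a| := by
    calc Real.cos ω * a ≤ |Real.cos ω * a| := le_abs_self _
    _ = |Real.cos ω| * |a| := abs_mul _ _
    _ ≤ 1 * |a| := by gcongr; exact Real.abs_cos_le_one ω
    _ = |a| := one_mul _
  nlinarith [sq_abs a]

lemma series_lemma {a : ℝ} (ha : |a| < 1) (ω : ℝ) :
    ∑' n : ℕ, a ^ (n + 1) * Real.cos ((n + 1) * ω)
      = (a * Real.cos ω - a ^ 2) / (1 - 2 * Real.cos ω * a + a ^ 2) := by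
  set x : ℂ := (a : ℂ) * Complex.exp (ω * Complex.I) with hx
  have hnx : ‖x‖ < 1 := by
    rw [hx, norm_mul, Complex.norm_exp_ofReal_mul_I, mul_one, Complex.norm_real]
    simpa using ha
  have hgeom : HasSum (fun n : ℕ => x ^ n) (1 - x)⁻¹ :=
    hasSum_geometric_of_norm_lt_one hnx
  have hsum : HasSum (fun n : ℕ => x ^ (n + 1)) ((1 - x)⁻¹ * x) := by
    simpa [pow_succ] using hgeom.mul_right x
  have hre := ((Complex.hasSum_iff _ _).1 hsum).1
  have hterm : ∀ n : ℕ, (x ^ (n + 1)).re = a ^ (n + 1) * Real.cos ((n + 1) * ω) := by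
    intro n
    rw [hx, mul_pow, ← Complex.exp_nat_mul, ← Complex.ofReal_pow]
    rw [show ((n + 1 : ℕ) : ℂ) * (↑ω * Complex.I) = ((((n : ℝ) + 1) * ω : ℝ) : ℂ) * Complex.I by
      push_cast; ring]
    rw [Complex.re_ofReal_mul, Complex.exp_ofReal_mul_I_re]
  have hval : ((1 - x)⁻¹ * x).re
      = (a * Real.cos ω - a ^ 2) / (1 - 2 * Real.cos ω * a + a ^ 2) := by
    have hD := Dpos ha ω
    have hs := Real.sin_sq_add_cos_sq ω
    have hxre : x.re = a * Real.cos ω := by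
      rw [hx, Complex.re_ofReal_mul, Complex.exp_ofReal_mul_I_re]
    have hxim : x.im = a * Real.sin ω := by
      rw [hx, Complex.im_ofReal_mul, Complex.exp_ofReal_mul_I_im]
    have hN : Complex.normSq (1 - x) = 1 - 2 * Real.cos ω * a + a ^ 2 := by
      rw [Complex.normSq_apply]
      simp only [Complex.sub_re, Complex.sub_im, Complex.one_re, Complex.one_im, hxre, hxim]
      linear_combination a ^ 2 * hs
    rw [show (1 - x)⁻¹ * x = x / (1 - x) from (div_eq_inv_mul _ _).symm, Complex.div_re, hN]
    simp only [Complex.sub_re, Complex.sub_im, Complex.one_re, Complex.one_im, hxre, hxim]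
    field_simp
    linear_combination (-(a ^ 2) / (1 - 2 * Real.cos ω * a + a ^ 2)) * hs
  rw [← hval, ← hre.tsum_eq]
  exact tsum_congr fun n => (hterm n).symm

lemma int_cos_int (k : ℤ) (hk : k ≠ 0) :
    ∫ ω in (0:ℝ)..(2 * π), Real.cos (k * ω) = 0 := by
  have h : (k : ℝ) ≠ 0 := Int.cast_ne_zero.mpr hk
  rw [intervalIntegral.integral_comp_mul_left (fun x => Real.cos x) h, integral_cos]
  have h1 : Real.sin ((k : ℝ) * (2 * π)) = 0 := by
    rw [show (k : ℝ) * (2 * π) = ((2 * k : ℤ) : ℝ) * π by push_cast; ring]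
    exact Real.sin_int_mul_pi _
  simp [h1]

lemma orth (n N : ℕ) :
    ∫ ω in (0:ℝ)..(2 * π), Real.cos ((n + 1 : ℕ) * ω) * Real.cos ((N : ℕ) * ω)
      = if (n + 1 : ℕ) = N then π else 0 := by
  have key : ∀ ω : ℝ, Real.cos ((n + 1 : ℕ) * ω) * Real.cos ((N : ℕ) * ω)
      = (Real.cos (((n + 1 + N : ℤ)) * ω) + Real.cos (((n + 1 - N : ℤ)) * ω)) / 2 := by
    intro ω
    push_cast
    rw [show ((n : ℝ) + 1 + N) * ω = ((n + 1) * ω) + (N * ω) by ring,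
      show ((n : ℝ) + 1 - N) * ω = ((n + 1) * ω) - (N * ω) by ring,
      Real.cos_add, Real.cos_sub]
    ring
  rw [intervalIntegral.integral_congr (g := fun ω =>
      (Real.cos (((n + 1 + N : ℤ)) * ω) + Real.cos (((n + 1 - N : ℤ)) * ω)) / 2)
      (fun ω _ => key ω)]
  have hint : ∀ k : ℤ, IntervalIntegrable (fun ω => Real.cos ((k : ℝ) * ω)) volume 0 (2 * π) :=
    fun k => (Real.continuous_cos.comp (continuous_const.mul continuous_id)).intervalIntegrable _ _
  rw [intervalIntegral.integral_div, intervalIntegral.integral_add (hint _) (hint _)]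
  rw [int_cos_int (n + 1 + N) (by omega)]
  by_cases hN : (n + 1 : ℕ) = N
  · have : ((n : ℤ) + 1 - N) = 0 := by omega
    rw [this]
    simp [hN, two_mul]
  · rw [int_cos_int (n + 1 - N) (by omega)]
    simp [hN]

lemma poisson {a : ℝ} (ha : |a| < 1) (N : ℕ) :
    ∫ ω in (0:ℝ)..(2 * π), Real.cos ((N : ℕ) * ω) / (1 - 2 * Real.cos ω * a + a ^ 2)
      = 2 * π * a ^ N / (1 - a ^ 2) := by
  have ha2 : a ^ 2 < 1 := by nlinarith [sq_abs a, abs_nonneg a]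
  have h1 : (1 : ℝ) - a ^ 2 ≠ 0 := by nlinarith
  have hle : (0 : ℝ) ≤ 2 * π := by positivity
  -- pointwise identity
  have key : ∀ ω : ℝ, Real.cos ((N : ℕ) * ω) / (1 - 2 * Real.cos ω * a + a ^ 2)
      = (Real.cos ((N : ℕ) * ω)
          + 2 * Real.cos ((N : ℕ) * ω) * ((a * Real.cos ω - a ^ 2) / (1 - 2 * Real.cos ω * a + a ^ 2)))
        / (1 - a ^ 2) := by
    intro ω
    have hD := Dpos ha ω
    field_simp
    ring
  rw [intervalIntegral.integral_congr (fun ω _ => key ω)]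
  have hcosN : Continuous (fun ω : ℝ => Real.cos ((N : ℕ) * ω)) :=
    Real.continuous_cos.comp (continuous_const.mul continuous_id)
  have hTcont : Continuous (fun ω : ℝ => 2 * Real.cos ((N : ℕ) * ω)
      * ((a * Real.cos ω - a ^ 2) / (1 - 2 * Real.cos ω * a + a ^ 2))) := by
    apply Continuous.mul (continuous_const.mul hcosN)
    apply Continuous.div (by continuity) (by continuity)
    exact fun ω => ne_of_gt (Dpos ha ω)
  rw [intervalIntegral.integral_div,
    intervalIntegral.integral_add (hcosN.intervalIntegrable _ _) (hTcont.intervalIntegrable _ _)]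
  -- first integral
  have hA : ∫ ω in (0:ℝ)..(2 * π), Real.cos ((N : ℕ) * ω)
      = if N = 0 then 2 * π else 0 := by
    by_cases hN : N = 0
    · simp [hN]
    · rw [show ((N : ℝ)) = ((N : ℤ) : ℝ) by push_cast; ring]
      rw [int_cos_int N (by exact_mod_cast hN)]
      simp [hN]
  -- second integral via series
  have hB : ∫ ω in (0:ℝ)..(2 * π), 2 * Real.cos ((N : ℕ) * ω)
      * ((a * Real.cos ω - a ^ 2) / (1 - 2 * Real.cos ω * a + a ^ 2))
      = if N = 0 then 0 else 2 * π * a ^ N := by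
    have hrw : ∀ ω : ℝ, 2 * Real.cos ((N : ℕ) * ω)
        * ((a * Real.cos ω - a ^ 2) / (1 - 2 * Real.cos ω * a + a ^ 2))
        = ∑' n : ℕ, 2 * Real.cos ((N : ℕ) * ω) * (a ^ (n + 1) * Real.cos ((n + 1) * ω)) := by
      intro ω
      rw [tsum_mul_left, series_lemma ha ω]
    rw [intervalIntegral.integral_congr (fun ω _ => hrw ω)]
    rw [intervalIntegral.integral_of_le hle]
    have hFint : ∀ n : ℕ, Integrable
        (fun ω : ℝ => 2 * Real.cos ((N : ℕ) * ω) * (a ^ (n + 1) * Real.cos ((n + 1) * ω)))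
        (MeasureTheory.volume.restrict (Set.Ioc (0:ℝ) (2 * π))) := by
      intro n
      apply Continuous.integrableOn_Ioc
      continuity
    have hFsum : Summable (fun n : ℕ => ∫ ω in Set.Ioc (0:ℝ) (2 * π),
        ‖2 * Real.cos ((N : ℕ) * ω) * (a ^ (n + 1) * Real.cos ((n + 1) * ω))‖) := by
      refine Summable.of_nonneg_of_le (f := fun n : ℕ => 2 * |a| ^ (n + 1) * (2 * π))
        (fun n => MeasureTheory.integral_nonneg (fun ω => norm_nonneg _)) (fun n => ?_) ?_
      · calc ∫ ω in Set.Ioc (0:ℝ) (2 * π),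
            ‖2 * Real.cos ((N : ℕ) * ω) * (a ^ (n + 1) * Real.cos ((n + 1) * ω))‖
            ≤ ∫ _ω in Set.Ioc (0:ℝ) (2 * π), 2 * |a| ^ (n + 1) := by
              apply MeasureTheory.setIntegral_mono_on ((hFint n).norm) _ measurableSet_Ioc
              · intro ω _
                rw [Real.norm_eq_abs, abs_mul, abs_mul, abs_mul, abs_pow]
                calc |(2:ℝ)| * |Real.cos ((N:ℕ) * ω)| * (|a| ^ (n+1) * |Real.cos (((n:ℝ)+1) * ω)|)
                    ≤ |(2:ℝ)| * 1 * (|a| ^ (n+1) * 1) := by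
                      gcongr
                      · exact Real.abs_cos_le_one _
                      · exact Real.abs_cos_le_one _
                  _ = 2 * |a| ^ (n+1) := by rw [abs_two]; ring
              · exact (MeasureTheory.integrableOn_const_iff).mpr (Or.inr (by
                  rw [Real.volume_Ioc]; exact ENNReal.ofReal_lt_top))
          _ = 2 * |a| ^ (n + 1) * (2 * π) := by
              rw [MeasureTheory.setIntegral_const, Real.volume_real_Ioc_of_le hle, smul_eq_mul, sub_zero]
              ring
      · have : Summable (fun n : ℕ => |a| ^ n) :=
          summable_geometric_of_lt_one (abs_nonneg a) ha
        refine (this.mul_left (2 * |a| * (2 * π))).congr (fun n => ?_)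
        rw [pow_succ]; ring
    rw [← MeasureTheory.integral_tsum_of_summable_integral_norm hFint hFsum]
    have hterm : ∀ n : ℕ, (∫ ω in Set.Ioc (0:ℝ) (2 * π),
        2 * Real.cos ((N : ℕ) * ω) * (a ^ (n + 1) * Real.cos ((n + 1) * ω)))
        = if n + 1 = N then 2 * a ^ (n + 1) * π else 0 := by
      intro n
      rw [← intervalIntegral.integral_of_le hle]
      have : ∀ ω : ℝ, 2 * Real.cos ((N : ℕ) * ω) * (a ^ (n + 1) * Real.cos ((n + 1) * ω))
          = (2 * a ^ (n + 1)) * (Real.cos ((n + 1 : ℕ) * ω) * Real.cos ((N : ℕ) * ω)) := by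
        intro ω; push_cast; ring
      rw [intervalIntegral.integral_congr (fun ω _ => this ω),
        intervalIntegral.integral_const_mul, orth n N]
      split_ifs <;> ring
    rw [tsum_congr hterm]
    by_cases hN : N = 0
    · subst hN
      simp
    · obtain ⟨M, rfl⟩ : ∃ M, N = M + 1 := ⟨N - 1, by omega⟩
      have : (fun n : ℕ => if n + 1 = M + 1 then 2 * a ^ (n + 1) * π else 0)
          = fun n : ℕ => if n = M then 2 * a ^ (M + 1) * π else 0 := by
        funext n
        by_cases h : n = M <;> simp [h]
      rw [this, tsum_ite_eq]
      simp [mul_comm]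
      ring
  rw [hA, hB]
  by_cases hN : N = 0 <;> simp [hN]

lemma inner_int {a : ℝ} (ha : |a| < 1) (m : ℕ) :
    ∫ ω in (0:ℝ)..(2 * π),
        (Real.cos (((m + 2 : ℕ)) * ω) - Real.cos ((m : ℕ) * ω)) / (1 - 2 * Real.cos ω * a + a ^ 2)
      = -(2 * π) * a ^ m := by
  have ha2 : a ^ 2 < 1 := by nlinarith [sq_abs a, abs_nonneg a]
  have h1 : (1 : ℝ) - a ^ 2 ≠ 0 := by nlinarith
  have hc : ∀ k : ℕ, IntervalIntegrable
      (fun ω => Real.cos ((k : ℕ) * ω) / (1 - 2 * Real.cos ω * a + a ^ 2))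
      MeasureTheory.volume 0 (2 * π) := by
    intro k
    apply Continuous.intervalIntegrable
    apply Continuous.div (by continuity) (by continuity)
    exact fun ω => ne_of_gt (Dpos ha ω)
  have key : ∀ ω : ℝ,
      (Real.cos (((m + 2 : ℕ)) * ω) - Real.cos ((m : ℕ) * ω)) / (1 - 2 * Real.cos ω * a + a ^ 2)
      = Real.cos (((m + 2 : ℕ)) * ω) / (1 - 2 * Real.cos ω * a + a ^ 2)
        - Real.cos ((m : ℕ) * ω) / (1 - 2 * Real.cos ω * a + a ^ 2) :=
    fun ω => sub_div _ _ _
  rw [intervalIntegral.integral_congr (fun ω _ => key ω),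
    intervalIntegral.integral_sub (hc (m + 2)) (hc m), poisson ha (m + 2), poisson ha m]
  field_simp
  ring

theorem stmt_5 (t : ℕ) (ht : 2 ≤ t) (j : ℤ) :
    (1 / π ^ 2) * ∫ φ in (0:ℝ)..(2 * π), ∫ ω in (0:ℝ)..(2 * π),
        (Real.cos (t * ω) - Real.cos ((t - 2 : ℕ) * ω)) * Real.sin (j * φ) * Real.sin φ /
          (1 - 2 * Real.cos ω * Real.cos φ + (Real.cos φ) ^ 2)
    = (1 / π) * ∫ φ in (0:ℝ)..(2 * π),
        (Real.cos φ) ^ (t - 2) * (Real.cos ((j + 1) * φ) - Real.cos ((j - 1) * φ)) := by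
  obtain ⟨m, rfl⟩ : ∃ m, t = m + 2 := ⟨t - 2, by omega⟩
  rw [show (m + 2) - 2 = m by omega]
  have hπ : π ≠ 0 := Real.pi_ne_zero
  have hae : ∀ᵐ φ : ℝ ∂MeasureTheory.volume, Real.sin φ ≠ 0 := by
    rw [MeasureTheory.ae_iff]
    simp only [ne_eq, not_not]
    refine MeasureTheory.measure_mono_null (fun x hx => ?_)
      ((Set.countable_range (fun n : ℤ => (n : ℝ) * π)).measure_zero _)
    obtain ⟨n, hn⟩ := Real.sin_eq_zero_iff.1 hx
    exact ⟨n, hn⟩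
  have step1 : (∫ φ in (0:ℝ)..(2 * π), ∫ ω in (0:ℝ)..(2 * π),
        (Real.cos ((m + 2 : ℕ) * ω) - Real.cos ((m : ℕ) * ω)) * Real.sin (j * φ) * Real.sin φ /
          (1 - 2 * Real.cos ω * Real.cos φ + (Real.cos φ) ^ 2))
      = ∫ φ in (0:ℝ)..(2 * π),
          (-(2 * π)) * ((Real.cos φ) ^ m * (Real.sin (j * φ) * Real.sin φ)) := by
    apply intervalIntegral.integral_congr_ae
    filter_upwards [hae] with φ hφ _
    have hs2 : 0 < Real.sin φ ^ 2 :=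
      lt_of_le_of_ne (sq_nonneg _) (Ne.symm (pow_ne_zero 2 hφ))
    have hc2 : Real.cos φ ^ 2 < 1 := by nlinarith [Real.sin_sq_add_cos_sq φ]
    have ha : |Real.cos φ| < 1 := by
      nlinarith [sq_abs (Real.cos φ), abs_nonneg (Real.cos φ)]
    have hrw : ∀ ω : ℝ,
        (Real.cos ((m + 2 : ℕ) * ω) - Real.cos ((m : ℕ) * ω)) * Real.sin (j * φ) * Real.sin φ /
          (1 - 2 * Real.cos ω * Real.cos φ + (Real.cos φ) ^ 2)
        = (Real.sin (j * φ) * Real.sin φ) *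
          ((Real.cos ((m + 2 : ℕ) * ω) - Real.cos ((m : ℕ) * ω)) /
            (1 - 2 * Real.cos ω * Real.cos φ + (Real.cos φ) ^ 2)) := by
      intro ω; ring
    rw [intervalIntegral.integral_congr (fun ω _ => hrw ω),
      intervalIntegral.integral_const_mul, inner_int ha m]
    ring
  rw [step1, intervalIntegral.integral_const_mul]
  have step2 : ∀ φ : ℝ,
      (Real.cos φ) ^ m * (Real.cos ((j + 1) * φ) - Real.cos ((j - 1) * φ))
      = (-2 : ℝ) * ((Real.cos φ) ^ m * (Real.sin (j * φ) * Real.sin φ)) := by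
    intro φ
    push_cast
    rw [show ((j : ℝ) + 1) * φ = j * φ + φ by ring, show ((j : ℝ) - 1) * φ = j * φ - φ by ring,
      Real.cos_add, Real.cos_sub]
    ring
  rw [intervalIntegral.integral_congr (fun φ _ => step2 φ), intervalIntegral.integral_const_mul]
  field_simp
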